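/- Assume that for each i = 1,…,n there exist t, s ∈ [a_i,b_i] with E_i(t) ≠ E_i(s). Then for every δ > 0 there exists λ₁ > 0 such that the reduced objective J (defined with this λ₁) is strictly convex on the closed ball of radius δ centered at the origin in ℝ^n. -/

import Mathlib

open Matrix Real Set MeasureTheory intervalIntegral

noncomputable def aux13_I0 (a b : ℝ) (E : ℝ → ℝ) (w : ℝ) : ℝ := ∫ t in a..b, Real.exp (w * E t)
noncomputable def aux13_I1 (a b : ℝ) (E : ℝ → ℝ) (w : ℝ) : ℝ := ∫ t in a..b, E t * Real.exp (w * E t)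
noncomputable def aux13_I2 (a b : ℝ) (E : ℝ → ℝ) (w : ℝ) : ℝ := ∫ t in a..b, (E t)^2 * Real.exp (w * E t)

section scalar
variable {a b : ℝ} {E : ℝ → ℝ} {M : ℝ}

lemma aux13_cont (hE : ContinuousOn E (Icc a b)) (w : ℝ) :
    ContinuousOn (fun t => Real.exp (w * E t)) (Icc a b) :=
  Real.continuous_exp.comp_continuousOn (continuousOn_const.mul hE)

lemma aux13_cont1 (hE : ContinuousOn E (Icc a b)) (w : ℝ) :
    ContinuousOn (fun t => E t * Real.exp (w * E t)) (Icc a b) :=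
  hE.mul (aux13_cont hE w)

lemma aux13_cont2 (hE : ContinuousOn E (Icc a b)) (w : ℝ) :
    ContinuousOn (fun t => (E t)^2 * Real.exp (w * E t)) (Icc a b) :=
  (hE.pow 2).mul (aux13_cont hE w)

lemma aux13_int (hab : a < b) {f : ℝ → ℝ} (hf : ContinuousOn f (Icc a b)) :
    IntervalIntegrable f MeasureTheory.volume a b := by
  apply ContinuousOn.intervalIntegrable
  rwa [Set.uIcc_of_le hab.le]

lemma aux13_meas (hab : a < b) {f : ℝ → ℝ} (hf : ContinuousOn f (Icc a b)) :
    AEStronglyMeasurable f (MeasureTheory.volume.restrict (Set.uIoc a b)) := by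
  refine (hf.aestronglyMeasurable measurableSet_Icc).mono_measure
    (Measure.restrict_mono ?_ le_rfl)
  rw [Set.uIoc_of_le hab.le]; exact Set.Ioc_subset_Icc_self

lemma aux13_hasDerivAt_I0 (hab : a < b) (hE : ContinuousOn E (Icc a b))
    (hM : ∀ t ∈ Icc a b, |E t| ≤ M) (w : ℝ) :
    HasDerivAt (aux13_I0 a b E) (aux13_I1 a b E w) w := by
  have h := intervalIntegral.hasDerivAt_integral_of_dominated_loc_of_deriv_le
    (F := fun x t => Real.exp (x * E t)) (F' := fun x t => E t * Real.exp (x * E t))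
    (x₀ := w) (a := a) (b := b) (μ := MeasureTheory.volume)
    (bound := fun _ => M * Real.exp ((|w| + 1) * M)) (s := Metric.ball w 1) (Metric.ball_mem_nhds w one_pos)
    (Filter.Eventually.of_forall fun x => aux13_meas hab (aux13_cont hE x))
    (aux13_int hab (aux13_cont hE w))
    (aux13_meas hab (aux13_cont1 hE w)) ?_ intervalIntegrable_const ?_
  · exact h.2
  · refine Filter.Eventually.of_forall fun t ht x hx => ?_
    have ht' : t ∈ Icc a b := by
      rw [Set.uIoc_of_le hab.le] at ht; exact Set.Ioc_subset_Icc_self ht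
    have hxw : |x| ≤ |w| + 1 := by
      have := Metric.mem_ball.1 hx
      rw [Real.dist_eq] at this
      have := abs_sub_abs_le_abs_sub x w
      linarith
    have hEt : |E t| ≤ M := hM t ht'
    have hMnn : 0 ≤ M := le_trans (abs_nonneg _) hEt
    have h1 : x * E t ≤ (|w| + 1) * M := by
      calc x * E t ≤ |x * E t| := le_abs_self _
        _ = |x| * |E t| := abs_mul _ _
        _ ≤ (|w| + 1) * M := by
            apply mul_le_mul hxw hEt (abs_nonneg _); positivity
    have h2 : Real.exp (x * E t) ≤ Real.exp ((|w| + 1) * M) := Real.exp_le_exp.2 h1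
    calc ‖E t * Real.exp (x * E t)‖ = |E t| * Real.exp (x * E t) := by
          rw [Real.norm_eq_abs, abs_mul, abs_of_pos (Real.exp_pos _)]
      _ ≤ M * Real.exp ((|w| + 1) * M) :=
          mul_le_mul hEt h2 (Real.exp_pos _).le hMnn
  · refine Filter.Eventually.of_forall fun t ht x hx => ?_
    simpa [mul_comm] using (hasDerivAt_mul_const (E t)).exp

lemma aux13_hasDerivAt_I1 (hab : a < b) (hE : ContinuousOn E (Icc a b))
    (hM : ∀ t ∈ Icc a b, |E t| ≤ M) (w : ℝ) :
    HasDerivAt (aux13_I1 a b E) (aux13_I2 a b E w) w := by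
  have h := intervalIntegral.hasDerivAt_integral_of_dominated_loc_of_deriv_le
    (F := fun x t => E t * Real.exp (x * E t)) (F' := fun x t => (E t)^2 * Real.exp (x * E t))
    (x₀ := w) (a := a) (b := b) (μ := MeasureTheory.volume)
    (bound := fun _ => M ^ 2 * Real.exp ((|w| + 1) * M)) (s := Metric.ball w 1) (Metric.ball_mem_nhds w one_pos)
    (Filter.Eventually.of_forall fun x => aux13_meas hab (aux13_cont1 hE x))
    (aux13_int hab (aux13_cont1 hE w))
    (aux13_meas hab (aux13_cont2 hE w)) ?_ intervalIntegrable_const ?_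
  · exact h.2
  · refine Filter.Eventually.of_forall fun t ht x hx => ?_
    have ht' : t ∈ Icc a b := by
      rw [Set.uIoc_of_le hab.le] at ht; exact Set.Ioc_subset_Icc_self ht
    have hxw : |x| ≤ |w| + 1 := by
      have := Metric.mem_ball.1 hx
      rw [Real.dist_eq] at this
      have := abs_sub_abs_le_abs_sub x w
      linarith
    have hEt : |E t| ≤ M := hM t ht'
    have hMnn : 0 ≤ M := le_trans (abs_nonneg _) hEt
    have h1 : x * E t ≤ (|w| + 1) * M := by
      calc x * E t ≤ |x * E t| := le_abs_self _
        _ = |x| * |E t| := abs_mul _ _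
        _ ≤ (|w| + 1) * M := by
            apply mul_le_mul hxw hEt (abs_nonneg _); positivity
    have h2 : Real.exp (x * E t) ≤ Real.exp ((|w| + 1) * M) := Real.exp_le_exp.2 h1
    have h4 : (E t)^2 ≤ M^2 := by nlinarith [sq_abs (E t), abs_nonneg (E t)]
    calc ‖(E t)^2 * Real.exp (x * E t)‖ = (E t)^2 * Real.exp (x * E t) := by
          rw [Real.norm_eq_abs, abs_of_nonneg (by positivity)]
      _ ≤ M^2 * Real.exp ((|w| + 1) * M) :=
          mul_le_mul h4 h2 (Real.exp_pos _).le (by positivity)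
  · refine Filter.Eventually.of_forall fun t ht x hx => ?_
    have := ((hasDerivAt_mul_const (E t)).exp (x := x)).const_mul (E t)
    refine this.congr_deriv ?_
    ring

end scalar

section scalar2
variable {a b : ℝ} {E : ℝ → ℝ} {M : ℝ}

lemma aux13_I0_lb' (hab : a < b) (hE : ContinuousOn E (Set.Icc a b))
    (hM : ∀ t ∈ Set.Icc a b, |E t| ≤ M) (w : ℝ) :
    (b - a) * Real.exp (-(|w| * M)) ≤ aux13_I0 a b E w := by
  have h := intervalIntegral.integral_mono_on (μ := MeasureTheory.volume)
    (f := fun _ : ℝ => Real.exp (-(|w| * M))) (g := fun t => Real.exp (w * E t)) hab.le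
    intervalIntegrable_const (aux13_int hab (aux13_cont hE w)) ?_
  · simpa [smul_eq_mul, aux13_I0] using h
  · intro t ht
    apply Real.exp_le_exp.2
    have h1 : |w * E t| ≤ |w| * M := by
      rw [abs_mul]
      exact mul_le_mul_of_nonneg_left (hM t ht) (abs_nonneg w)
    have := (abs_le.1 h1).1
    linarith

lemma aux13_I0_pos (hab : a < b) (hE : ContinuousOn E (Set.Icc a b))
    (hM : ∀ t ∈ Set.Icc a b, |E t| ≤ M) (w : ℝ) : 0 < aux13_I0 a b E w :=
  lt_of_lt_of_le (mul_pos (sub_pos.2 hab) (Real.exp_pos _)) (aux13_I0_lb' hab hE hM w)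

lemma aux13_I0_ub (hab : a < b) (hE : ContinuousOn E (Set.Icc a b))
    (hM : ∀ t ∈ Set.Icc a b, |E t| ≤ M) (w : ℝ) :
    aux13_I0 a b E w ≤ (b - a) * Real.exp (|w| * M) := by
  have h := intervalIntegral.integral_mono_on (μ := MeasureTheory.volume)
    (g := fun _ : ℝ => Real.exp (|w| * M)) (f := fun t => Real.exp (w * E t)) hab.le
    (aux13_int hab (aux13_cont hE w)) intervalIntegrable_const ?_
  · simpa [smul_eq_mul, aux13_I0] using h
  · intro t ht
    apply Real.exp_le_exp.2
    have h1 : |w * E t| ≤ |w| * M := by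
      rw [abs_mul]
      exact mul_le_mul_of_nonneg_left (hM t ht) (abs_nonneg w)
    exact le_trans (le_abs_self _) h1

lemma aux13_I1_ub (hab : a < b) (hE : ContinuousOn E (Set.Icc a b))
    (hM : ∀ t ∈ Set.Icc a b, |E t| ≤ M) (w : ℝ) :
    |aux13_I1 a b E w| ≤ M * Real.exp (|w| * M) * (b - a) := by
  have h := intervalIntegral.norm_integral_le_of_norm_le_const
    (C := M * Real.exp (|w| * M)) (f := fun t => E t * Real.exp (w * E t))
    (a := a) (b := b) ?_
  · rw [abs_of_pos (sub_pos.2 hab)] at h; simpa [aux13_I1] using h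
  · intro t ht
    rw [Set.uIoc_of_le hab.le] at ht
    have ht' : t ∈ Set.Icc a b := Set.Ioc_subset_Icc_self ht
    have h1 : |w * E t| ≤ |w| * M := by
      rw [abs_mul]; exact mul_le_mul_of_nonneg_left (hM t ht') (abs_nonneg w)
    have h2 : Real.exp (w * E t) ≤ Real.exp (|w| * M) :=
      Real.exp_le_exp.2 (le_trans (le_abs_self _) h1)
    have h3 : ‖E t * Real.exp (w * E t)‖ = |E t| * Real.exp (w * E t) := by
      rw [Real.norm_eq_abs, abs_mul, abs_of_pos (Real.exp_pos _)]
    rw [h3]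
    exact mul_le_mul (hM t ht') h2 (Real.exp_pos _).le
      (le_trans (abs_nonneg _) (hM t ht'))

lemma aux13_I2_ub (hab : a < b) (hE : ContinuousOn E (Set.Icc a b))
    (hM : ∀ t ∈ Set.Icc a b, |E t| ≤ M) (w : ℝ) :
    |aux13_I2 a b E w| ≤ M ^ 2 * Real.exp (|w| * M) * (b - a) := by
  have h := intervalIntegral.norm_integral_le_of_norm_le_const
    (C := M ^ 2 * Real.exp (|w| * M)) (f := fun t => (E t) ^ 2 * Real.exp (w * E t))
    (a := a) (b := b) ?_
  · rw [abs_of_pos (sub_pos.2 hab)] at h; simpa [aux13_I2] using h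
  · intro t ht
    rw [Set.uIoc_of_le hab.le] at ht
    have ht' : t ∈ Set.Icc a b := Set.Ioc_subset_Icc_self ht
    have h1 : |w * E t| ≤ |w| * M := by
      rw [abs_mul]; exact mul_le_mul_of_nonneg_left (hM t ht') (abs_nonneg w)
    have h2 : Real.exp (w * E t) ≤ Real.exp (|w| * M) :=
      Real.exp_le_exp.2 (le_trans (le_abs_self _) h1)
    have hEt : |E t| ≤ M := hM t ht'
    have h4 : (E t)^2 ≤ M^2 := by nlinarith [sq_abs (E t), abs_nonneg (E t)]
    have h3 : ‖(E t)^2 * Real.exp (w * E t)‖ = (E t)^2 * Real.exp (w * E t) := by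
      rw [Real.norm_eq_abs, abs_of_nonneg (by positivity)]
    rw [h3]
    exact mul_le_mul h4 h2 (Real.exp_pos _).le (by positivity)

lemma aux13_hasDerivAt_h (hab : a < b) (hE : ContinuousOn E (Set.Icc a b))
    (hM : ∀ t ∈ Set.Icc a b, |E t| ≤ M) (dj : ℝ) (w : ℝ) :
    HasDerivAt (fun w => Real.log ((1/(b-a)) * aux13_I0 a b E w) - dj)
      (aux13_I1 a b E w / aux13_I0 a b E w) w := by
  have hba : (0:ℝ) < b - a := sub_pos.2 hab
  have hI0 : 0 < aux13_I0 a b E w := aux13_I0_pos hab hE hM w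
  have hc : (0:ℝ) < 1/(b-a) := one_div_pos.2 hba
  have h1 : HasDerivAt (fun w => (1/(b-a)) * aux13_I0 a b E w)
      ((1/(b-a)) * aux13_I1 a b E w) w := (aux13_hasDerivAt_I0 hab hE hM w).const_mul _
  have h2 := (h1.log (mul_pos hc hI0).ne').sub_const dj
  refine h2.congr_deriv ?_
  rw [mul_div_mul_left _ _ hc.ne']

lemma aux13_hasDerivAt_h1 (hab : a < b) (hE : ContinuousOn E (Set.Icc a b))
    (hM : ∀ t ∈ Set.Icc a b, |E t| ≤ M) (w : ℝ) :
    HasDerivAt (fun w => aux13_I1 a b E w / aux13_I0 a b E w)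
      ((aux13_I2 a b E w * aux13_I0 a b E w - aux13_I1 a b E w * aux13_I1 a b E w)
        / (aux13_I0 a b E w)^2) w :=
  (aux13_hasDerivAt_I1 hab hE hM w).div (aux13_hasDerivAt_I0 hab hE hM w)
    (aux13_I0_pos hab hE hM w).ne'

lemma aux13_h_bound (hab : a < b) (hE : ContinuousOn E (Set.Icc a b))
    (hM : ∀ t ∈ Set.Icc a b, |E t| ≤ M) (w : ℝ) :
    |Real.log ((1/(b-a)) * aux13_I0 a b E w)| ≤ |w| * M := by
  have hba : (0:ℝ) < b - a := sub_pos.2 hab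
  have hI0 : 0 < aux13_I0 a b E w := aux13_I0_pos hab hE hM w
  have hc : (0:ℝ) < 1/(b-a) := by positivity
  have hub : (1/(b-a)) * aux13_I0 a b E w ≤ Real.exp (|w| * M) := by
    have := aux13_I0_ub hab hE hM w
    rw [div_mul_eq_mul_div, one_mul, div_le_iff₀ hba]
    linarith [this]
  have hlb : Real.exp (-(|w| * M)) ≤ (1/(b-a)) * aux13_I0 a b E w := by
    have h := aux13_I0_lb' hab hE hM w
    rw [div_mul_eq_mul_div, one_mul, le_div_iff₀ hba]
    linarith [h]
  rw [abs_le]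
  constructor
  · have := Real.log_le_log (Real.exp_pos _) hlb
    rwa [Real.log_exp] at this
  · have := Real.log_le_log (by positivity) hub
    rwa [Real.log_exp] at this

lemma aux13_h2_bound (hab : a < b) (hE : ContinuousOn E (Set.Icc a b))
    (hM : ∀ t ∈ Set.Icc a b, |E t| ≤ M) (w : ℝ) :
    |(aux13_I2 a b E w * aux13_I0 a b E w - aux13_I1 a b E w * aux13_I1 a b E w)
        / (aux13_I0 a b E w)^2| ≤ 2 * M^2 * Real.exp (4 * (|w| * M)) := by
  have hba : (0:ℝ) < b - a := sub_pos.2 hab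
  have hI0 : 0 < aux13_I0 a b E w := aux13_I0_pos hab hE hM w
  have hMnn : 0 ≤ M := le_trans (abs_nonneg _) (hM a ⟨le_refl a, hab.le⟩)
  set u := |w| * M with hu
  have hun : 0 ≤ u := mul_nonneg (abs_nonneg _) hMnn
  have hI0u := aux13_I0_ub hab hE hM w
  have hI0l := aux13_I0_lb' hab hE hM w
  have hI1 := aux13_I1_ub hab hE hM w
  have hI2 := aux13_I2_ub hab hE hM w
  have hnum : |aux13_I2 a b E w * aux13_I0 a b E w - aux13_I1 a b E w * aux13_I1 a b E w|
      ≤ 2 * M^2 * (b-a)^2 * (Real.exp u)^2 := by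
    have h1 : |aux13_I2 a b E w * aux13_I0 a b E w| ≤ M^2 * (b-a)^2 * (Real.exp u)^2 := by
      rw [abs_mul, abs_of_pos hI0]
      calc |aux13_I2 a b E w| * aux13_I0 a b E w
          ≤ (M ^ 2 * Real.exp u * (b - a)) * ((b-a) * Real.exp u) :=
            mul_le_mul hI2 hI0u hI0.le (by positivity)
        _ = M^2 * (b-a)^2 * (Real.exp u)^2 := by ring
    have h2 : |aux13_I1 a b E w * aux13_I1 a b E w| ≤ M^2 * (b-a)^2 * (Real.exp u)^2 := by
      rw [abs_mul]
      calc |aux13_I1 a b E w| * |aux13_I1 a b E w|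
          ≤ (M * Real.exp u * (b - a)) * (M * Real.exp u * (b - a)) :=
            mul_le_mul hI1 hI1 (abs_nonneg _)
              (mul_nonneg (mul_nonneg hMnn (Real.exp_pos _).le) hba.le)
        _ = M^2 * (b-a)^2 * (Real.exp u)^2 := by ring
    calc |aux13_I2 a b E w * aux13_I0 a b E w - aux13_I1 a b E w * aux13_I1 a b E w|
        ≤ |aux13_I2 a b E w * aux13_I0 a b E w| + |aux13_I1 a b E w * aux13_I1 a b E w| :=
          abs_sub _ _
      _ ≤ 2 * M^2 * (b-a)^2 * (Real.exp u)^2 := by linarith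
  have hden : ((b-a) * Real.exp (-u))^2 ≤ (aux13_I0 a b E w)^2 := by
    apply pow_le_pow_left₀ (by positivity) hI0l
  rw [abs_div, abs_of_pos (pow_pos hI0 2)]
  calc |aux13_I2 a b E w * aux13_I0 a b E w - aux13_I1 a b E w * aux13_I1 a b E w|
        / (aux13_I0 a b E w)^2
      ≤ (2 * M^2 * (b-a)^2 * (Real.exp u)^2) / (((b-a) * Real.exp (-u))^2) :=
        div_le_div₀ (by positivity) hnum (pow_pos (mul_pos hba (Real.exp_pos _)) 2) hden
    _ = 2 * M^2 * Real.exp (4 * u) := by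
        rw [div_eq_iff (ne_of_gt (pow_pos (mul_pos hba (Real.exp_pos _)) 2))]
        symm
        have e1 : Real.exp (4*u) * (Real.exp (-u))^2 = (Real.exp u)^2 := by
          rw [sq, sq, ← Real.exp_add, ← Real.exp_add, ← Real.exp_add]
          congr 1; ring
        calc 2 * M^2 * Real.exp (4 * u) * ((b-a) * Real.exp (-u))^2
            = 2 * M^2 * (b-a)^2 * (Real.exp (4*u) * (Real.exp (-u))^2) := by ring
          _ = 2 * M^2 * (b-a)^2 * (Real.exp u)^2 := by rw [e1]

end scalar2


lemma aux13_core (n : ℕ) (δ : ℝ) (hδ : 0 < δ) (N : Matrix (Fin n) (Fin n) ℝ)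
    (h h1 h2 : Fin n → ℝ → ℝ)
    (hd1 : ∀ j w, HasDerivAt (h j) (h1 j w) w)
    (hd2 : ∀ j w, HasDerivAt (h1 j) (h2 j w) w)
    (C : ℝ) (hC : 0 < C)
    (hb0 : ∀ j, ∀ w ∈ Set.Icc (-δ) δ, |h j w| ≤ C)
    (hb2 : ∀ j, ∀ w ∈ Set.Icc (-δ) δ, |h2 j w| ≤ C) :
    ∃ lam1 : ℝ, 0 < lam1 ∧
      StrictConvexOn ℝ (Metric.closedBall (0 : Fin n → ℝ) δ)
        (fun z => (1/2) * (∑ i, (∑ j, N i j * h j (z j))^2)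
          + (lam1/2) * ∑ i, (z i)^2) := by
  classical
  set Rm : ℝ := (∑ i, ∑ j, |N i j|) + 1 with hRmdef
  have hRmpos : 0 < Rm := by
    have : (0:ℝ) ≤ ∑ i, ∑ j, |N i j| :=
      Finset.sum_nonneg fun _ _ => Finset.sum_nonneg fun _ _ => abs_nonneg _
    simp only [hRmdef]; linarith
  have hRm : ∀ i j, |N i j| ≤ Rm := by
    intro i j
    have h1' : |N i j| ≤ ∑ j', |N i j'| :=
      Finset.single_le_sum (f := fun j' => |N i j'|) (fun _ _ => abs_nonneg _) (Finset.mem_univ j)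
    have h2' : (∑ j', |N i j'|) ≤ ∑ i', ∑ j', |N i' j'| :=
      Finset.single_le_sum (f := fun i' => ∑ j', |N i' j'|)
        (fun i' _ => Finset.sum_nonneg fun _ _ => abs_nonneg _) (Finset.mem_univ i)
    simp only [hRmdef]; linarith
  set lam1 : ℝ := (n:ℝ)^2 * Rm^2 * C^2 + 1 with hlamdef
  have hlam1 : 0 < lam1 := by positivity
  refine ⟨lam1, hlam1, convex_closedBall _ _, ?_⟩
  intro x hx y hy hxy p q hp hq hpq
  set v : Fin n → ℝ := fun j => y j - x j with hvdef
  have hvx : ∃ j, v j ≠ 0 := by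
    by_contra hcon
    push_neg at hcon
    apply hxy
    funext j
    have := hcon j
    simp only [hvdef] at this
    linarith [sub_eq_zero.1 this]
  -- membership bounds
  have hxd : ∀ j, |x j| ≤ δ := by
    intro j
    have := mem_closedBall_zero_iff.1 hx
    calc |x j| = ‖x j‖ := rfl
      _ ≤ ‖x‖ := norm_le_pi_norm x j
      _ ≤ δ := this
  have hyd : ∀ j, |y j| ≤ δ := by
    intro j
    have := mem_closedBall_zero_iff.1 hy
    calc |y j| = ‖y j‖ := rfl
      _ ≤ ‖y‖ := norm_le_pi_norm y j
      _ ≤ δ := this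
  have hmem : ∀ j, ∀ s ∈ Set.Icc (0:ℝ) 1, x j + s * v j ∈ Set.Icc (-δ) δ := by
    intro j s hs
    obtain ⟨hs0, hs1⟩ := hs
    have e : x j + s * v j = (1-s) * x j + s * y j := by simp only [hvdef]; ring
    rw [e]
    have h1' : |(1-s) * x j + s * y j| ≤ (1-s) * |x j| + s * |y j| := by
      calc |(1-s) * x j + s * y j| ≤ |(1-s) * x j| + |s * y j| := abs_add_le _ _
        _ = (1-s) * |x j| + s * |y j| := by
            rw [abs_mul, abs_mul, abs_of_nonneg (by linarith), abs_of_nonneg hs0]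
    have h2' : (1-s) * |x j| + s * |y j| ≤ δ := by
      have := mul_le_mul_of_nonneg_left (hxd j) (by linarith : (0:ℝ) ≤ 1 - s)
      have := mul_le_mul_of_nonneg_left (hyd j) hs0
      nlinarith
    constructor
    · linarith [(abs_le.1 (le_trans h1' (le_refl _))).1, h1', h2']
    · linarith [(abs_le.1 (le_trans h1' (le_refl _))).2, h1', h2']
  -- the function along the segment
  set ψ : Fin n → ℝ → ℝ := fun i s => ∑ j, N i j * h j (x j + s * v j) with hψdef
  set ψ' : Fin n → ℝ → ℝ := fun i s => ∑ j, N i j * (h1 j (x j + s * v j) * v j) with hψ'def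
  set ψ'' : Fin n → ℝ → ℝ :=
    fun i s => ∑ j, N i j * (h2 j (x j + s * v j) * v j * v j) with hψ''def
  set φ : ℝ → ℝ := fun s => (1/2) * (∑ i, (ψ i s)^2)
      + (lam1/2) * ∑ i, (x i + s * v i)^2 with hφdef
  set φ1 : ℝ → ℝ := fun s => (∑ i, ψ i s * ψ' i s)
      + lam1 * ∑ i, (x i + s * v i) * v i with hφ1def
  set φ2 : ℝ → ℝ := fun s => (∑ i, ((ψ' i s)^2 + ψ i s * ψ'' i s))
      + lam1 * ∑ i, v i * v i with hφ2def
  have hθ : ∀ j s, HasDerivAt (fun s => x j + s * v j) (v j) s := by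
    intro j s
    simpa using (hasDerivAt_mul_const (v j)).const_add (x j)
  have hψd : ∀ i s, HasDerivAt (fun s => ψ i s) (ψ' i s) s := by
    intro i s
    apply HasDerivAt.fun_sum
    intro j _
    exact (((hd1 j _).comp s (hθ j s))).const_mul (N i j)
  have hψ'd : ∀ i s, HasDerivAt (fun s => ψ' i s) (ψ'' i s) s := by
    intro i s
    apply HasDerivAt.fun_sum
    intro j _
    exact ((((hd2 j _).comp s (hθ j s))).mul_const (v j)).const_mul (N i j)
  have hφd : ∀ s, HasDerivAt φ (φ1 s) s := by
    intro s
    have hpart1 : HasDerivAt (fun s => (1/2) * (∑ i, (ψ i s)^2))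
        ((1/2) * (∑ i, 2 * (ψ i s)^1 * ψ' i s)) s := by
      apply HasDerivAt.const_mul
      apply HasDerivAt.fun_sum
      intro i _
      simpa using (hψd i s).fun_pow 2
    have hpart2 : HasDerivAt (fun s => (lam1/2) * ∑ i, (x i + s * v i)^2)
        ((lam1/2) * (∑ i, 2 * (x i + s * v i)^1 * v i)) s := by
      apply HasDerivAt.const_mul
      apply HasDerivAt.fun_sum
      intro i _
      simpa using (hθ i s).fun_pow 2
    have := hpart1.add hpart2
    refine this.congr_deriv (Eq.symm ?_)
    simp only [hφ1def, pow_one, Finset.mul_sum]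
    refine congrArg₂ (· + ·) ?_ ?_ <;>
      · apply Finset.sum_congr rfl
        intro i _
        ring
  have hφ1d : ∀ s, HasDerivAt φ1 (φ2 s) s := by
    intro s
    have hpart1 : HasDerivAt (fun s => ∑ i, ψ i s * ψ' i s)
        (∑ i, (ψ' i s * ψ' i s + ψ i s * ψ'' i s)) s := by
      apply HasDerivAt.fun_sum
      intro i _
      exact (hψd i s).mul (hψ'd i s)
    have hpart2 : HasDerivAt (fun s => lam1 * ∑ i, (x i + s * v i) * v i)
        (lam1 * ∑ i, v i * v i) s := by
      apply HasDerivAt.const_mul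
      apply HasDerivAt.fun_sum
      intro i _
      exact (hθ i s).mul_const (v i)
    have := hpart1.add hpart2
    refine this.congr_deriv (Eq.symm ?_)
    simp only [hφ2def]
    refine congrArg₂ (· + ·) ?_ rfl
    apply Finset.sum_congr rfl
    intro i _
    ring
  -- second derivative positivity
  have hS : 0 < ∑ j, v j * v j := by
    obtain ⟨j0, hj0⟩ := hvx
    apply Finset.sum_pos' (fun j _ => mul_self_nonneg _)
    exact ⟨j0, Finset.mem_univ j0, mul_self_pos.2 hj0⟩
  set S : ℝ := ∑ j, v j * v j with hSdef
  have hpos : ∀ s ∈ Set.Icc (0:ℝ) 1, 0 < φ2 s := by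
    intro s hs
    have hB1 : ∀ i, |ψ i s| ≤ (n:ℝ) * (Rm * C) := by
      intro i
      calc |ψ i s| ≤ ∑ j, |N i j * h j (x j + s * v j)| :=
            Finset.abs_sum_le_sum_abs _ _
        _ ≤ ∑ _j : Fin n, Rm * C := by
            apply Finset.sum_le_sum
            intro j _
            rw [abs_mul]
            exact mul_le_mul (hRm i j) (hb0 j _ (hmem j s hs)) (abs_nonneg _) hRmpos.le
        _ = (n:ℝ) * (Rm * C) := by simp [Finset.sum_const, Finset.card_univ]
    have hB2 : ∀ i, |ψ'' i s| ≤ Rm * C * S := by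
      intro i
      calc |ψ'' i s| ≤ ∑ j, |N i j * (h2 j (x j + s * v j) * v j * v j)| :=
            Finset.abs_sum_le_sum_abs _ _
        _ ≤ ∑ j, Rm * C * (v j * v j) := by
            apply Finset.sum_le_sum
            intro j _
            have e : |N i j * (h2 j (x j + s * v j) * v j * v j)|
                = |N i j| * |h2 j (x j + s * v j)| * (|v j| * |v j|) := by
              rw [abs_mul, abs_mul, abs_mul]; ring
            rw [e, abs_mul_abs_self]
            apply mul_le_mul _ le_rfl (mul_self_nonneg _) _
            · exact mul_le_mul (hRm i j) (hb2 j _ (hmem j s hs)) (abs_nonneg _) hRmpos.le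
            · positivity
        _ = Rm * C * S := by rw [← Finset.mul_sum, hSdef]
    have hterm : ∀ i, -(((n:ℝ) * (Rm * C)) * (Rm * C * S)) ≤ (ψ' i s)^2 + ψ i s * ψ'' i s := by
      intro i
      have habs : |ψ i s * ψ'' i s| ≤ ((n:ℝ) * (Rm * C)) * (Rm * C * S) := by
        rw [abs_mul]
        apply mul_le_mul (hB1 i) (hB2 i) (abs_nonneg _)
        positivity
      have := neg_abs_le (ψ i s * ψ'' i s)
      nlinarith [sq_nonneg (ψ' i s)]
    have hsum : (n:ℝ) * (-(((n:ℝ) * (Rm * C)) * (Rm * C * S)))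
        ≤ ∑ i, ((ψ' i s)^2 + ψ i s * ψ'' i s) := by
      calc (n:ℝ) * (-(((n:ℝ) * (Rm * C)) * (Rm * C * S)))
          = ∑ _i : Fin n, (-(((n:ℝ) * (Rm * C)) * (Rm * C * S))) := by
            simp [Finset.sum_const, Finset.card_univ]
        _ ≤ ∑ i, ((ψ' i s)^2 + ψ i s * ψ'' i s) :=
            Finset.sum_le_sum fun i _ => hterm i
    have hkey : (n:ℝ) * (-(((n:ℝ) * (Rm * C)) * (Rm * C * S))) + lam1 * S = S := by
      simp only [hlamdef]; ring
    simp only [hφ2def, ← hSdef]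
    linarith
  -- strict convexity of φ on [0,1]
  have hφcont : ContinuousOn φ (Set.Icc (0:ℝ) 1) :=
    (continuous_iff_continuousAt.2 fun s => (hφd s).differentiableAt.continuousAt).continuousOn
  have hderiv : deriv φ = φ1 := funext fun s => (hφd s).deriv
  have hconv : StrictConvexOn ℝ (Set.Icc (0:ℝ) 1) φ := by
    apply strictConvexOn_of_deriv2_pos (convex_Icc 0 1) hφcont
    intro s hs
    rw [interior_Icc] at hs
    have : deriv^[2] φ s = deriv (deriv φ) s := rfl
    rw [this, hderiv]
    rw [(hφ1d s).deriv]
    exact hpos s ⟨hs.1.le, hs.2.le⟩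
  -- conclude
  have hkey := hconv.2 (Set.left_mem_Icc.2 zero_le_one) (Set.right_mem_Icc.2 zero_le_one)
    (by norm_num : (0:ℝ) ≠ 1) hp hq hpq
  have e0 : φ (p • (0:ℝ) + q • 1) = φ q := by norm_num
  have eφ0 : φ 0 = (1/2) * (∑ i, (∑ j, N i j * h j (x j))^2) + (lam1/2) * ∑ i, (x i)^2 := by
    simp only [hφdef, hψdef]
    norm_num
  have eφ1 : φ 1 = (1/2) * (∑ i, (∑ j, N i j * h j (y j))^2) + (lam1/2) * ∑ i, (y i)^2 := by
    simp only [hφdef, hψdef, hvdef]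
    norm_num
  have eφq : φ q = (1/2) * (∑ i, (∑ j, N i j * h j ((p • x + q • y) j))^2)
      + (lam1/2) * ∑ i, ((p • x + q • y) i)^2 := by
    have harg : ∀ j, x j + q * v j = (p • x + q • y) j := by
      intro j
      simp only [hvdef, Pi.add_apply, Pi.smul_apply, smul_eq_mul]
      have : p = 1 - q := by linarith
      rw [this]; ring
    simp only [hφdef, hψdef]
    congr 1
    · congr 1
      apply Finset.sum_congr rfl
      intro i _
      congr 1
      apply Finset.sum_congr rfl
      intro j _
      rw [harg j]
    · congr 1
      apply Finset.sum_congr rfl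
      intro i _
      rw [harg i]
  rw [e0, eφ0, eφ1, eφq] at hkey
  simpa [smul_eq_mul] using hkey


theorem stmt_13 (m : ℕ) (hm : 1 ≤ m)
    (a b : Fin (m + 1) → ℝ) (hab : ∀ i, a i < b i)
    (E : Fin (m + 1) → ℝ → ℝ)
    (hE : ∀ i, ContinuousOn (E i) (Set.Icc (a i) (b i)))
    (g : (Fin (m + 1) → ℝ) → Fin (m + 1) → ℝ)
    (hg : ∀ z i, g z i =
      Real.log ((1 / (b i - a i)) * ∫ t in (a i)..(b i), Real.exp (z i * E i t)))
    (d : Fin (m + 1) → ℝ)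
    (bfun : (Fin (m + 1) → ℝ) → Fin m → ℝ)
    (hbfun : ∀ z i, bfun z i =
      (d i.succ - g z i.succ) - (d i.castSucc - g z i.castSucc))
    (A : Matrix (Fin m) (Fin (m + 1)) ℝ)
    (hA : ∀ i j, A i j = if j = i.castSucc then -1 else if j = i.succ then 1 else 0)
    (lam2 : ℝ) (hlam2 : 0 < lam2)
    (K : Matrix (Fin (m + 1)) (Fin (m + 1)) ℝ)
    (hK : K = Aᵀ * A + lam2 • (1 : Matrix (Fin (m + 1)) (Fin (m + 1)) ℝ))
    (hne : ∀ i, ∃ t ∈ Set.Icc (a i) (b i), ∃ s ∈ Set.Icc (a i) (b i),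
      E i t ≠ E i s) :
    ∀ δ : ℝ, 0 < δ → ∃ lam1 : ℝ, 0 < lam1 ∧
      StrictConvexOn ℝ (Metric.closedBall (0 : Fin (m + 1) → ℝ) δ)
        (fun z =>
          (1 / 2) * (∑ i, (K⁻¹.mulVec (Aᵀ.mulVec (bfun z)) i + g z i - d i) ^ 2)
            + (lam1 / 2) * (∑ i, (z i) ^ 2)) := by
  intro δ hδ
  classical
  choose M hM using fun i => IsCompact.exists_bound_of_continuousOn isCompact_Icc (hE i)
  have hM' : ∀ i, ∀ t ∈ Set.Icc (a i) (b i), |E i t| ≤ M i := fun i t ht => hM i t ht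
  have hMnn : ∀ i, 0 ≤ M i := fun i =>
    le_trans (abs_nonneg _) (hM' i (a i) ⟨le_refl _, (hab i).le⟩)
  set H : Fin (m+1) → ℝ → ℝ := fun j w =>
    Real.log ((1/(b j - a j)) * aux13_I0 (a j) (b j) (E j) w) - d j with hH
  set H1 : Fin (m+1) → ℝ → ℝ := fun j w =>
    aux13_I1 (a j) (b j) (E j) w / aux13_I0 (a j) (b j) (E j) w with hH1
  set H2 : Fin (m+1) → ℝ → ℝ := fun j w =>
    (aux13_I2 (a j) (b j) (E j) w * aux13_I0 (a j) (b j) (E j) w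
      - aux13_I1 (a j) (b j) (E j) w * aux13_I1 (a j) (b j) (E j) w)
      / (aux13_I0 (a j) (b j) (E j) w)^2 with hH2
  have hd1 : ∀ j w, HasDerivAt (H j) (H1 j w) w := fun j w =>
    aux13_hasDerivAt_h (hab j) (hE j) (hM' j) (d j) w
  have hd2 : ∀ j w, HasDerivAt (H1 j) (H2 j w) w := fun j w =>
    aux13_hasDerivAt_h1 (hab j) (hE j) (hM' j) w
  set C : ℝ := ∑ j, (δ * M j + |d j| + 2 * (M j)^2 * Real.exp (4 * (δ * M j)) + 1) with hC
  have hCterm : ∀ j, (1:ℝ) ≤ δ * M j + |d j| + 2 * (M j)^2 * Real.exp (4 * (δ * M j)) + 1 := by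
    intro j
    have h1 : 0 ≤ δ * M j := mul_nonneg hδ.le (hMnn j)
    have h2 : 0 ≤ |d j| := abs_nonneg _
    have h3 : 0 ≤ 2 * (M j)^2 * Real.exp (4 * (δ * M j)) := by positivity
    linarith
  have hCj : ∀ j, δ * M j + |d j| + 2 * (M j)^2 * Real.exp (4 * (δ * M j)) + 1 ≤ C := by
    intro j
    exact Finset.single_le_sum
      (f := fun j => δ * M j + |d j| + 2 * (M j)^2 * Real.exp (4 * (δ * M j)) + 1)
      (fun j _ => le_trans zero_le_one (hCterm j)) (Finset.mem_univ j)
  have hCpos : (0:ℝ) < C :=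
    lt_of_lt_of_le one_pos (le_trans (hCterm 0) (hCj 0))
  have hb0 : ∀ j, ∀ w ∈ Set.Icc (-δ) δ, |H j w| ≤ C := by
    intro j w hw
    have hwd : |w| ≤ δ := abs_le.2 ⟨hw.1, hw.2⟩
    have hlog := aux13_h_bound (hab j) (hE j) (hM' j) w
    have habs : |H j w| ≤ |w| * M j + |d j| := by
      simp only [hH]
      exact le_trans (abs_sub _ _) (by linarith)
    have hmul : |w| * M j ≤ δ * M j := mul_le_mul_of_nonneg_right hwd (hMnn j)
    have h3 : 0 ≤ 2 * (M j)^2 * Real.exp (4 * (δ * M j)) := by positivity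
    linarith [hCj j]
  have hb2 : ∀ j, ∀ w ∈ Set.Icc (-δ) δ, |H2 j w| ≤ C := by
    intro j w hw
    have hwd : |w| ≤ δ := abs_le.2 ⟨hw.1, hw.2⟩
    have hbd := aux13_h2_bound (hab j) (hE j) (hM' j) w
    have hmul : |w| * M j ≤ δ * M j := mul_le_mul_of_nonneg_right hwd (hMnn j)
    have hexp : Real.exp (4 * (|w| * M j)) ≤ Real.exp (4 * (δ * M j)) :=
      Real.exp_le_exp.2 (by linarith)
    have h2 : 2 * (M j)^2 * Real.exp (4 * (|w| * M j))
        ≤ 2 * (M j)^2 * Real.exp (4 * (δ * M j)) := by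
      apply mul_le_mul_of_nonneg_left hexp (by positivity)
    have h1 : 0 ≤ δ * M j := mul_nonneg hδ.le (hMnn j)
    have h2' : 0 ≤ |d j| := abs_nonneg _
    simp only [hH2]
    linarith [hCj j]
  set B : Matrix (Fin m) (Fin (m+1)) ℝ :=
    Matrix.of fun l j => (if j = l.castSucc then (1:ℝ) else 0)
      - (if j = l.succ then 1 else 0) with hB
  set N : Matrix (Fin (m+1)) (Fin (m+1)) ℝ := K⁻¹ * Aᵀ * B + 1 with hN
  have hNkey : ∀ z i, K⁻¹.mulVec (Aᵀ.mulVec (bfun z)) i + g z i - d i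
      = ∑ j, N i j * H j (z j) := by
    intro z i
    have hgH : ∀ j, g z j - d j = H j (z j) := by
      intro j
      simp only [hH, hg, aux13_I0]
    have hbf : bfun z = B.mulVec (fun j => g z j - d j) := by
      funext l
      rw [hbfun]
      simp [hB, Matrix.mulVec, dotProduct, sub_mul, Finset.sum_sub_distrib,
        ite_mul, one_mul, zero_mul, Finset.sum_ite_eq']
      ring
    have step : K⁻¹.mulVec (Aᵀ.mulVec (bfun z)) i + g z i - d i
        = ∑ j, N i j * (g z j - d j) := by
      rw [hbf, Matrix.mulVec_mulVec, Matrix.mulVec_mulVec, hN]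
      simp only [Matrix.add_apply, Matrix.one_apply, add_mul, Finset.sum_add_distrib,
        ite_mul, one_mul, zero_mul, Finset.sum_ite_eq', Finset.sum_ite_eq,
        Finset.mem_univ, if_true, Matrix.mulVec, dotProduct]
      ring
    rw [step]
    exact Finset.sum_congr rfl fun j _ => by rw [hgH j]
  obtain ⟨lam1, hl1, hconv⟩ := aux13_core (m+1) δ hδ N H H1 H2 hd1 hd2 C hCpos hb0 hb2
  refine ⟨lam1, hl1, ?_⟩
  have hfe : (fun z : Fin (m+1) → ℝ =>
      (1 / 2) * (∑ i, (K⁻¹.mulVec (Aᵀ.mulVec (bfun z)) i + g z i - d i) ^ 2)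
        + (lam1 / 2) * (∑ i, (z i) ^ 2))
      = (fun z : Fin (m+1) → ℝ =>
      (1/2) * (∑ i, (∑ j, N i j * H j (z j))^2) + (lam1/2) * ∑ i, (z i)^2) := by
    funext z
    congr 1
    congr 1
    exact Finset.sum_congr rfl fun i _ => by rw [hNkey z i]
  rw [hfe]
  exact hconv
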